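/- Let I be a strongly stable monomial ideal in R = k[x_1,...,x_n]. For s ≥ dim R/I, the reduction number of R/I with respect to the reduction generated by x_{n-s+1},...,x_n equals min{t : x_{n-s}^{t+1} ∈ I}. -/

import Mathlib

open MvPolynomial

noncomputable section

/-- The total degree of a monomial exponent vector. -/
def monDeg {n : ℕ} (A : Fin n →₀ ℕ) : ℕ := A.sum fun _ e => e

/-- `BorelSpec A B` : the monomial `x^B` is a Borel specialization of `x^A`,
i.e. `x^B` is obtained from `x^A` by replacing every variable `x_i` of `x^A`
by a variable `x_{f i}` with `f i ≤ i`. -/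
def BorelSpec {n : ℕ} (A B : Fin n →₀ ℕ) : Prop :=
  ∃ f : Fin n → Fin n, (∀ i, f i ≤ i) ∧ B = A.mapDomain f

/-- `borelPSet A` : the set of (exponent vectors of) monomials that can be
Borel-specialized to `x^A`. -/
def borelPSet {n : ℕ} (A : Fin n →₀ ℕ) : Set (Fin n →₀ ℕ) := {C | BorelSpec C A}

/-- A monomial ideal: an ideal generated by monomials. -/
def IsMonomialIdeal {k : Type*} [Field k] {n : ℕ} (I : Ideal (MvPolynomial (Fin n) k)) : Prop :=
  ∃ S : Set (Fin n →₀ ℕ), I = Ideal.span ((fun A => (monomial A (1 : k))) '' S)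

/-- Borel-fixed: `I` is fixed by every invertible linear substitution sending each
variable `x_i` to a linear combination of the variables `x_j` with `j ≤ i`
(the Borel group of upper triangular invertible matrices). -/
def IsBorelFixed {k : Type*} [Field k] {n : ℕ} (I : Ideal (MvPolynomial (Fin n) k)) : Prop :=
  ∀ g : Matrix (Fin n) (Fin n) k, IsUnit g.det → (∀ i j : Fin n, i < j → g i j = 0) →
    I.map (aeval (fun i => ∑ j, MvPolynomial.C (g i j) * X j) :
      MvPolynomial (Fin n) k →ₐ[k] MvPolynomial (Fin n) k) = I

/-- The Hilbert function `t ↦ dim_k (R/I)_t`. -/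
def hilb {k : Type*} [Field k] {n : ℕ} (I : Ideal (MvPolynomial (Fin n) k)) (t : ℕ) : ℕ :=
  Module.finrank k
    ((homogeneousSubmodule (Fin n) k t).map (Ideal.Quotient.mkₐ k I).toLinearMap)

/-- `Q` generates a reduction of `R/I` : `(Q + I)_t = R_t` for all large `t`. -/
def IsReductionOf {k : Type*} [Field k] {n : ℕ} (Q I : Ideal (MvPolynomial (Fin n) k)) : Prop :=
  ∃ N : ℕ, ∀ t ≥ N, ∀ p : MvPolynomial (Fin n) k, p.IsHomogeneous t → p ∈ Q ⊔ I

/-- The reduction number `r_Q(R/I)` : the least `r` such that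
`(Q + I)_t = R_t` for all `t > r`. -/
def redNum {k : Type*} [Field k] {n : ℕ} (Q I : Ideal (MvPolynomial (Fin n) k)) : ℕ :=
  sInf {r : ℕ | ∀ t > r, ∀ p : MvPolynomial (Fin n) k, p.IsHomogeneous t → p ∈ Q ⊔ I}

/-- `Q` is an `s`-reduction of `R/I` : it is generated by `s` linear forms and is a
reduction of `R/I`. -/
def IsSReduction {k : Type*} [Field k] {n : ℕ} (s : ℕ)
    (Q I : Ideal (MvPolynomial (Fin n) k)) : Prop :=
  (∃ z : Fin s → MvPolynomial (Fin n) k,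
      (∀ i, (z i).IsHomogeneous 1) ∧ Q = Ideal.span (Set.range z)) ∧
  IsReductionOf Q I

/-- The `s`-reduction number `r_s(R/I)` : the minimum of `r_Q(R/I)` over all
`s`-reductions `Q` of `R/I`. -/
def sRedNum {k : Type*} [Field k] {n : ℕ} (s : ℕ) (I : Ideal (MvPolynomial (Fin n) k)) : ℕ :=
  sInf {r : ℕ | ∃ Q, IsSReduction s Q I ∧ redNum Q I = r}

/-- Strong stability condition on a monomial ideal: if `x^A ∈ I` is divisible by `x_i`,
then `x^A x_j / x_i ∈ I` for all `j ≤ i`. -/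
def StronglyStable {k : Type*} [Field k] {n : ℕ} (I : Ideal (MvPolynomial (Fin n) k)) : Prop :=
  ∀ (A : Fin n →₀ ℕ) (i j : Fin n), monomial A (1 : k) ∈ I → A i ≠ 0 → j ≤ i →
    monomial (A - Finsupp.single i 1 + Finsupp.single j 1) (1 : k) ∈ I

/-- Lex-segment condition: if `x^A ∈ I` and `x^B ≥ x^A` in the lexicographic order
(with `x_1 > x_2 > ⋯ > x_n`) and `deg x^B = deg x^A`, then `x^B ∈ I`. -/
def IsLexSegment {k : Type*} [Field k] {n : ℕ} (I : Ideal (MvPolynomial (Fin n) k)) : Prop :=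
  ∀ A B : Fin n →₀ ℕ, monomial A (1 : k) ∈ I → monDeg B = monDeg A →
    Finsupp.Lex (· < ·) (· < ·) A B → monomial B (1 : k) ∈ I

/-- A homogeneous ideal: closed under taking homogeneous components. -/
def IsHomogeneousIdeal {k : Type*} [Field k] {n : ℕ} (I : Ideal (MvPolynomial (Fin n) k)) : Prop :=
  ∀ p ∈ I, ∀ t : ℕ, homogeneousComponent t p ∈ I

/-- The ideal generated by the last `s` variables `x_{n-s+1}, …, x_n`. -/
def lastVars (k : Type*) [Field k] (n s : ℕ) : Ideal (MvPolynomial (Fin n) k) :=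
  Ideal.span ((fun i => (X i : MvPolynomial (Fin n) k)) '' {i : Fin n | n - s ≤ (i : ℕ)})



section Stmt6Aux
variable {k : Type*} [Field k] {n : ℕ}

private lemma stmt6_degree_add (f g : Fin n →₀ ℕ) : (f + g).degree = f.degree + g.degree := by
  simp [Finsupp.degree_eq_weight_one, map_add]

private lemma stmt6_degree_single (a : Fin n) (b : ℕ) : (Finsupp.single a b).degree = b := by
  rcases eq_or_ne b 0 with rfl | hb
  · simp
  · exact Finsupp.degree_single a b

private lemma stmt6_sub_add_apply (B : Fin n →₀ ℕ) (a b i : Fin n) :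
    (B - Finsupp.single a 1 + Finsupp.single b 1 : Fin n →₀ ℕ) i =
      B i - (if a = i then 1 else 0) + (if b = i then 1 else 0) := by
  simp [Finsupp.tsub_apply, Finsupp.single_apply]

private lemma stmt6_spread (I : Ideal (MvPolynomial (Fin n) k))
    (hss : ∀ (A : Fin n →₀ ℕ) (i j : Fin n), monomial A (1 : k) ∈ I → A i ≠ 0 → j ≤ i →
      monomial (A - Finsupp.single i 1 + Finsupp.single j 1) (1 : k) ∈ I)
    (m : Fin n) (d : ℕ) (hm : monomial (Finsupp.single m d) (1 : k) ∈ I) :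
    ∀ A : Fin n →₀ ℕ, A.degree = d → (∀ i, ¬ i ≤ m → A i = 0) → monomial A (1 : k) ∈ I := by
  suffices H : ∀ c (A : Fin n →₀ ℕ), A.degree = d → (∀ i, ¬ i ≤ m → A i = 0) →
      d - A m ≤ c → monomial A (1 : k) ∈ I by
    intro A hd hsupp; exact H d A hd hsupp (Nat.sub_le _ _)
  intro c
  induction c with
  | zero =>
    intro A hd hsupp hc
    have h1 : A m ≤ d := hd ▸ Finsupp.le_degree m A
    have h2 : A m = d := by omega
    have : A = Finsupp.single m d := by
      ext i
      rcases eq_or_ne i m with rfl | hne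
      · simp [h2]
      · have hAi : A i = 0 := by
          by_contra h
          rcases eq_or_ne d 0 with rfl | hd0
          · rw [Finsupp.degree_eq_zero_iff] at hd
            rw [hd] at h; simp at h
          · have hmems : m ∈ A.support := Finsupp.mem_support_iff.mpr (by omega)
            have hi : i ∈ A.support := Finsupp.mem_support_iff.mpr h
            have : A m + A i ≤ A.degree := by
              calc A m + A i = ∑ x ∈ {m, i}, A x := by
                    rw [Finset.sum_pair (fun h' => hne h'.symm)]
                _ ≤ ∑ x ∈ A.support, A x := Finset.sum_le_sum_of_subset (by
                    intro x hx; simp at hx; rcases hx with rfl | rfl <;> assumption)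
                _ = A.degree := rfl
            omega
        simp [hAi, Finsupp.single_apply, Ne.symm hne]
    rwa [this]
  | succ c ih =>
    intro A hd hsupp hc
    rcases Nat.lt_or_ge c (d - A m) with hlt | hge
    · have hAm : A m < d := by omega
      have hj : ∃ j, j ≠ m ∧ A j ≠ 0 := by
        by_contra h
        push_neg at h
        have : A = Finsupp.single m (A m) := by
          ext i
          rcases eq_or_ne i m with rfl | hne
          · simp
          · simp [Finsupp.single_apply, Ne.symm hne, h i hne]
        rw [this, stmt6_degree_single] at hd
        omega
      obtain ⟨j, hjm, hj0⟩ := hj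
      have hjle : j ≤ m := by
        by_contra h
        exact hj0 (hsupp j h)
      set A' : Fin n →₀ ℕ := A - Finsupp.single j 1 + Finsupp.single m 1 with hA'
      have hA'app : ∀ i, A' i = A i - (if j = i then 1 else 0) + (if m = i then 1 else 0) :=
        fun i => stmt6_sub_add_apply A j m i
      have hA'm : A' m = A m + 1 := by
        rw [hA'app m, if_neg hjm, if_pos rfl]; omega
      have hA'j : A' j = A j - 1 := by
        rw [hA'app j, if_pos rfl, if_neg (Ne.symm hjm)]; omega
      have hdA' : A'.degree = d := by
        have h1 : A - Finsupp.single j 1 + Finsupp.single j 1 = A := by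
          ext i
          rw [stmt6_sub_add_apply]
          rcases eq_or_ne j i with rfl | hne
          · rw [if_pos rfl]; omega
          · rw [if_neg hne]; omega
        have h2 : (A - Finsupp.single j 1).degree + 1 = d := by
          have h3 := stmt6_degree_add (A - Finsupp.single j 1) (Finsupp.single j 1)
          rw [h1, stmt6_degree_single] at h3
          omega
        have h4 := stmt6_degree_add (A - Finsupp.single j 1) (Finsupp.single m 1)
        rw [stmt6_degree_single] at h4
        rw [hA', h4]
        omega
      have hsupp' : ∀ i, ¬ i ≤ m → A' i = 0 := by
        intro i hi
        have hAi : A i = 0 := hsupp i hi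
        have him : m ≠ i := fun h => hi (h ▸ le_refl m)
        have hji : j ≠ i := fun h => hi (h ▸ hjle)
        rw [hA'app i, if_neg him, if_neg hji, hAi]
      have hcA' : d - A' m ≤ c := by omega
      have hmemA' := ih A' hdA' hsupp' hcA'
      have hA'mne : A' m ≠ 0 := by omega
      have hres := hss A' m j hmemA' hA'mne hjle
      have heq : A' - Finsupp.single m 1 + Finsupp.single j 1 = A := by
        ext i
        rw [stmt6_sub_add_apply]
        rcases eq_or_ne m i with rfl | him
        · rw [if_pos rfl, if_neg (by rintro rfl; exact hjm rfl), hA'm]; omega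
        · rcases eq_or_ne j i with rfl | hji
          · rw [if_neg him, if_pos rfl, hA'j]; omega
          · rw [if_neg him, if_neg hji, hA'app i, if_neg hji, if_neg him]; omega
      rwa [heq] at hres
    · exact ih A hd hsupp hge

end Stmt6Aux

/-- For a strongly stable monomial ideal `I` and `s ≥ dim R/I`,
`r_{(x_{n-s+1},…,x_n)}(R/I) = min {t | x_{n-s}^{t+1} ∈ I}`. -/
theorem stmt6 {k : Type*} [Field k] {n : ℕ} (I : Ideal (MvPolynomial (Fin n) k))
    (hmon : IsMonomialIdeal I) (hss : StronglyStable I)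
    (s : ℕ) (hs : 1 ≤ s) (hsn : s < n)
    (hdim : ringKrullDim (MvPolynomial (Fin n) k ⧸ I) ≤ (s : ℕ)) :
    redNum (lastVars k n s) I =
      sInf {t : ℕ | monomial (Finsupp.single (⟨n - s - 1, by omega⟩ : Fin n) (t + 1)) (1 : k) ∈ I} := by
  obtain ⟨S, hS⟩ := hmon
  set m : Fin n := ⟨n - s - 1, by omega⟩ with hmdef
  set T : Set (Fin n) := {i : Fin n | n - s ≤ (i : ℕ)} with hT
  have hXmono : ∀ i : Fin n, (X i : MvPolynomial (Fin n) k) = monomial (Finsupp.single i 1) 1 :=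
    fun i => rfl
  have hQI : lastVars k n s ⊔ I =
      Ideal.span ((fun A => (monomial A (1 : k))) ''
        (((fun i : Fin n => Finsupp.single i (1 : ℕ)) '' T) ∪ S)) := by
    rw [Set.image_union, Ideal.span_union, hS, lastVars]
    congr 2
    rw [Set.image_image]
    exact Set.image_congr fun i _ => hXmono i
  rw [redNum]
  congr 1
  ext r
  simp only [Set.mem_setOf_eq]
  constructor
  · intro h
    have hp : (monomial (Finsupp.single m (r + 1)) (1 : k)).IsHomogeneous (r + 1) :=
      isHomogeneous_monomial 1 (stmt6_degree_single m (r + 1))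
    have hmem := h (r + 1) (Nat.lt_succ_self r) _ hp
    rw [hQI, mem_ideal_span_monomial_image] at hmem
    obtain ⟨si, hsi, hle⟩ := hmem (Finsupp.single m (r + 1))
      (by rw [mem_support_iff, coeff_monomial, if_pos rfl]; exact one_ne_zero)
    rcases hsi with ⟨i, hiT, rfl⟩ | hsiS
    · exfalso
      have := hle i
      rw [Finsupp.single_apply, if_pos rfl, Finsupp.single_apply,
        if_neg (by intro h'; rw [← h'] at hiT; simp [hmdef, hT] at hiT; omega)] at this
      omega
    · have hgen : monomial si (1 : k) ∈ I := by
        rw [hS]; exact Ideal.subset_span ⟨si, hsiS, rfl⟩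
      have : monomial (Finsupp.single m (r + 1)) (1 : k)
          = monomial (Finsupp.single m (r + 1) - si) 1 * monomial si 1 := by
        rw [monomial_mul, one_mul, tsub_add_cancel_of_le hle]
      rw [this]
      exact Ideal.mul_mem_left _ _ hgen
  · intro h t ht p hp
    rw [p.as_sum]
    refine Ideal.sum_mem _ fun A hA => ?_
    have hdeg : A.degree = t := by
      by_contra hne
      exact (mem_support_iff.mp hA) (hp.coeff_eq_zero hne)
    by_cases hcase : ∃ i : Fin n, ¬ i ≤ m ∧ A i ≠ 0
    · obtain ⟨i, him, hAi⟩ := hcase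
      have hXi : (X i : MvPolynomial (Fin n) k) ∈ lastVars k n s := by
        refine Ideal.subset_span ⟨i, ?_, rfl⟩
        simp only [hT, Set.mem_setOf_eq]
        by_contra h'
        exact him (Fin.le_def.mpr (show (i : ℕ) ≤ n - s - 1 by omega))
      have heq : monomial A (coeff A p)
          = monomial (A - Finsupp.single i 1) (coeff A p) * X i := by
        rw [hXmono, monomial_mul, mul_one, tsub_add_cancel_of_le
          (Finsupp.single_le_iff.mpr (by omega))]
      rw [heq]
      exact Ideal.mem_sup_left (Ideal.mul_mem_left _ _ hXi)
    · push_neg at hcase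
      have hxmt : monomial (Finsupp.single m t) (1 : k) ∈ I := by
        have : Finsupp.single m t = Finsupp.single m (t - (r + 1)) + Finsupp.single m (r + 1) := by
          rw [← Finsupp.single_add]; congr 1; omega
        rw [this, ← one_mul (1 : k), ← monomial_mul]
        exact Ideal.mul_mem_left _ _ h
      have hAI : monomial A (1 : k) ∈ I :=
        stmt6_spread I hss m t hxmt A hdeg fun i hi => hcase i (not_le.mp hi)
      have : monomial A (coeff A p) = C (coeff A p) * monomial A 1 := by
        rw [C_mul_monomial, mul_one]
      rw [this]
      exact Ideal.mem_sup_right (Ideal.mul_mem_left _ _ hAI)
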